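/- Let 0 ≤ β < 2, n ≥ 2, k ≥ 0, μ = (n-2+2k)/(2-β) and let K_μ(r,t) = ((2-β)t)^{-μ-1} exp(-r^{2-β}/((2-β)²t)) r^k. Then for 1 ≤ m ≤ ∞ and the measure dη(r) = r^{2k+n-1-β}dr on (0,∞), one has ‖K_μ(·,t)/r^k‖_{L^m(dη)} ≤ (2-β)^{((4k+2n-β-2)/((2-β)m)) - μ - 1} · m^{-(2k+n-β)/((2-β)m)} · Γ(μ+1)^{1/m} · t^{((2k+n-β)/(2-β))(1/m - 1)} for all t > 0. -/

import Mathlib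

open MeasureTheory Real ENNReal

lemma aux_integrableOn_rpow_mul_exp_neg_mul_rpow {s p b : ℝ} (hs : -1 < s) (hp : 0 < p)
    (hb : 0 < b) :
    IntegrableOn (fun x : ℝ => x ^ s * Real.exp (-b * x ^ p)) (Set.Ioi 0) := by
  set c : ℝ := (s + 1) / p - 1 with hc
  have hc1 : 0 < c + 1 := by
    have : 0 < (s + 1) / p := div_pos (by linarith) hp
    simp only [hc]; linarith
  have hf : IntegrableOn (fun y : ℝ => Real.exp (-y) * y ^ c) (Set.Ioi 0) := by
    simpa using Real.GammaIntegral_convergent hc1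
  have h2 : IntegrableOn (fun x : ℝ => Real.exp (-(b * x)) * (b * x) ^ c) (Set.Ioi 0) := by
    have := (integrableOn_Ioi_comp_mul_left_iff
      (fun y : ℝ => Real.exp (-y) * y ^ c) 0 hb).2 (by simpa using hf)
    simpa using this
  have h3 : IntegrableOn
      (fun x : ℝ => b ^ (-c) * (Real.exp (-(b * x)) * (b * x) ^ c)) (Set.Ioi 0) :=
    h2.const_mul _
  have h4 : IntegrableOn (fun x : ℝ => x ^ c * Real.exp (-(b * x))) (Set.Ioi 0) := by
    refine (integrableOn_congr_fun (fun x hx => ?_) measurableSet_Ioi).1 h3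
    rw [Real.mul_rpow hb.le (le_of_lt hx), ← mul_assoc, ← mul_assoc, mul_comm (b ^ (-c)),
      mul_assoc _ (b ^ (-c)), ← Real.rpow_add hb, neg_add_cancel, Real.rpow_zero, mul_one]
    ring
  have h5 := (integrableOn_Ioi_comp_rpow_iff'
    (fun y : ℝ => y ^ c * Real.exp (-(b * y))) hp.ne').2 h4
  refine (integrableOn_congr_fun (fun x hx => ?_) measurableSet_Ioi).2 h5
  have hx0 : (0:ℝ) < x := hx
  rw [smul_eq_mul, ← Real.rpow_mul hx0.le, ← mul_assoc, ← Real.rpow_add hx0, neg_mul,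
    show p - 1 + p * c = s by rw [hc]; field_simp; ring]

/-- `L^m` bound (w.r.t. the weighted measure `dη(r) = r^{2k+n-1-β}dr` on `(0,∞)`)
for the weighted heat kernel `K_μ(r,t) = ((2-β)t)^{-μ-1} e^{-r^{2-β}/((2-β)²t)} r^k`.
For `m = ∞` the conventions `m^{-c/m} = 1`, `Γ(μ+1)^{1/m} = 1` and exponent of `t`
equal to `-(2k+n-β)/(2-β)` are realized via `m⁻¹.toReal = 0` and `(0:ℝ)^(0:ℝ) = 1`. -/
theorem kernel_Lm_bound (n k : ℕ) (β μ : ℝ) (hn : 2 ≤ n) (hβ0 : 0 ≤ β) (hβ2 : β < 2)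
    (hμ : μ = ((n : ℝ) - 2 + 2 * k) / (2 - β)) (m : ℝ≥0∞) (hm : 1 ≤ m) :
    ∀ t : ℝ, 0 < t →
      eLpNorm
        (fun r : ℝ =>
          (((2 - β) * t) ^ (-μ - 1) * Real.exp (-(r ^ (2 - β) / ((2 - β) ^ 2 * t))) *
              r ^ (k : ℝ)) / r ^ (k : ℝ))
        m
        (((volume : Measure ℝ).restrict (Set.Ioi 0)).withDensity
          (fun r => ENNReal.ofReal (r ^ (2 * (k : ℝ) + n - 1 - β))))
      ≤ ENNReal.ofReal
          ((2 - β) ^ (((4 * (k : ℝ) + 2 * n - β - 2) / (2 - β)) * m⁻¹.toReal - μ - 1) *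
            m.toReal ^ (-((2 * (k : ℝ) + n - β) / (2 - β)) * m⁻¹.toReal) *
            Real.Gamma (μ + 1) ^ m⁻¹.toReal *
            t ^ (((2 * (k : ℝ) + n - β) / (2 - β)) * (m⁻¹.toReal - 1))) := by
  intro t ht
  have hc2 : (0:ℝ) < 2 - β := by linarith
  have hμ0 : 0 ≤ μ := by
    rw [hμ]
    have hn' : (2:ℝ) ≤ n := by exact_mod_cast hn
    have hk' : (0:ℝ) ≤ 2 * k := by positivity
    exact div_nonneg (by linarith) hc2.le
  have hG : 0 < Real.Gamma (μ + 1) := Real.Gamma_pos_of_pos (by linarith)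
  have hA : (0:ℝ) < ((2 - β) * t) ^ (-μ - 1) := Real.rpow_pos_of_pos (by positivity) _
  have hq1 : (2 * (k:ℝ) + n - β) / (2 - β) = μ + 1 := by
    rw [hμ]; field_simp; ring
  have hq2 : (4 * (k:ℝ) + 2 * n - β - 2) / (2 - β) = 2 * μ + 1 := by
    rw [hμ]; field_simp; ring
  set η : Measure ℝ := (((volume : Measure ℝ).restrict (Set.Ioi 0)).withDensity
      (fun r => ENNReal.ofReal (r ^ (2 * (k : ℝ) + n - 1 - β)))) with hη
  have hcong :
      (fun r : ℝ =>
          (((2 - β) * t) ^ (-μ - 1) * Real.exp (-(r ^ (2 - β) / ((2 - β) ^ 2 * t))) *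
              r ^ (k : ℝ)) / r ^ (k : ℝ))
        =ᵐ[η]
      (fun r : ℝ =>
          ((2 - β) * t) ^ (-μ - 1) * Real.exp (-(r ^ (2 - β) / ((2 - β) ^ 2 * t)))) := by
    refine Filter.Eventually.filter_mono (withDensity_absolutelyContinuous _ _).ae_le ?_
    refine (ae_restrict_iff' measurableSet_Ioi).2 (ae_of_all _ fun r hr => ?_)
    have : (0:ℝ) < r ^ (k:ℝ) := Real.rpow_pos_of_pos hr _
    dsimp only
    rw [mul_div_assoc, div_self this.ne', mul_one]
  rw [eLpNorm_congr_ae hcong]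
  rcases eq_or_ne m ∞ with htop | hfin
  · subst htop
    simp only [ENNReal.inv_top, ENNReal.toReal_zero, ENNReal.toReal_top, mul_zero, zero_mul,
      Real.rpow_zero, mul_one, one_mul, zero_sub, eLpNorm_exponent_top]
    have hexpeq : (2 * (k:ℝ) + n - β) / (2 - β) * -1 = -μ - 1 := by rw [hq1]; ring
    have hbd : ∀ᵐ r ∂η, ‖((2 - β) * t) ^ (-μ - 1) *
        Real.exp (-(r ^ (2 - β) / ((2 - β) ^ 2 * t)))‖ ≤
        (2 - β) ^ (-μ - 1) * t ^ ((2 * (k:ℝ) + n - β) / (2 - β) * -1) := by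
      rw [hexpeq]
      refine Filter.Eventually.filter_mono (withDensity_absolutelyContinuous _ _).ae_le ?_
      refine (ae_restrict_iff' measurableSet_Ioi).2 (ae_of_all _ fun r hr => ?_)
      have hr0 : (0:ℝ) < r := hr
      have hexp : Real.exp (-(r ^ (2 - β) / ((2 - β) ^ 2 * t))) ≤ 1 := by
        rw [Real.exp_le_one_iff]
        have h1 : (0:ℝ) ≤ r ^ (2 - β) := (Real.rpow_pos_of_pos hr0 _).le
        have h2 : (0:ℝ) < (2 - β) ^ 2 * t := by positivity
        simp only [neg_nonpos]
        positivity
      rw [Real.norm_eq_abs, abs_mul, abs_of_nonneg hA.le, abs_of_nonneg (Real.exp_pos _).le,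
        Real.mul_rpow hc2.le ht.le]
      exact mul_le_of_le_one_right (by positivity) hexp
    exact eLpNormEssSup_le_of_ae_bound hbd
  · have hm0 : m ≠ 0 := (zero_lt_one.trans_le hm).ne'
    set p : ℝ := m.toReal with hpdef
    have hp0 : 0 < p := ENNReal.toReal_pos hm0 hfin
    have hp1 : 1 ≤ p := by
      rw [hpdef, ← ENNReal.toReal_one]
      exact ENNReal.toReal_mono hfin hm
    have hinv : m⁻¹.toReal = p⁻¹ := by rw [ENNReal.toReal_inv]
    set b : ℝ := p / ((2 - β) ^ 2 * t) with hbdef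
    have hb : 0 < b := by positivity
    set A : ℝ := ((2 - β) * t) ^ (-μ - 1) with hAdef
    set w : ℝ := 2 * (k:ℝ) + n - 1 - β with hwdef
    have hw : -1 < w := by
      have hn' : (2:ℝ) ≤ n := by exact_mod_cast hn
      have hk' : (0:ℝ) ≤ 2 * k := by positivity
      rw [hwdef]; linarith
    rw [eLpNorm_eq_lintegral_rpow_enorm_toReal hm0 hfin]
    have hDmeas : Measurable (fun r : ℝ => ENNReal.ofReal (r ^ w)) := by fun_prop
    have hgmeas : Measurable (fun r : ℝ =>
        A * Real.exp (-(r ^ (2 - β) / ((2 - β) ^ 2 * t)))) := by fun_prop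
    have hGmeas : Measurable (fun r : ℝ =>
        ‖A * Real.exp (-(r ^ (2 - β) / ((2 - β) ^ 2 * t)))‖ₑ ^ p) := by fun_prop
    rw [hη, lintegral_withDensity_eq_lintegral_mul _ hDmeas hGmeas]
    have hset : ∫⁻ r in Set.Ioi 0,
        ((fun r : ℝ => ENNReal.ofReal (r ^ w)) * fun r : ℝ =>
          ‖A * Real.exp (-(r ^ (2 - β) / ((2 - β) ^ 2 * t)))‖ₑ ^ p) r
        = ∫⁻ r in Set.Ioi 0,
            ENNReal.ofReal (A ^ p * (r ^ w * Real.exp (-b * r ^ (2 - β)))) := by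
      refine setLIntegral_congr_fun measurableSet_Ioi (fun r hr => ?_)
      have hr0 : (0:ℝ) < r := hr
      have hgnn : 0 ≤ A * Real.exp (-(r ^ (2 - β) / ((2 - β) ^ 2 * t))) := by positivity
      simp only [Pi.mul_apply]
      rw [Real.enorm_eq_ofReal hgnn, ENNReal.ofReal_rpow_of_nonneg hgnn hp0.le,
        ← ENNReal.ofReal_mul (by positivity)]
      congr 1
      rw [Real.mul_rpow hA.le (Real.exp_pos _).le, ← Real.exp_mul]
      have : -(r ^ (2 - β) / ((2 - β) ^ 2 * t)) * p = -b * r ^ (2 - β) := by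
        rw [hbdef]; field_simp
      rw [this]; ring
    rw [hset]
    have hInt : IntegrableOn
        (fun r : ℝ => A ^ p * (r ^ w * Real.exp (-b * r ^ (2 - β)))) (Set.Ioi 0) :=
      (aux_integrableOn_rpow_mul_exp_neg_mul_rpow hw hc2 hb).const_mul _
    have hnn : 0 ≤ᵐ[(volume : Measure ℝ).restrict (Set.Ioi 0)]
        (fun r : ℝ => A ^ p * (r ^ w * Real.exp (-b * r ^ (2 - β)))) := by
      refine (ae_restrict_iff' measurableSet_Ioi).2 (ae_of_all _ fun r hr => ?_)
      have hr0 : (0:ℝ) < r := hr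
      positivity
    rw [← ofReal_integral_eq_lintegral_ofReal hInt hnn, MeasureTheory.integral_const_mul,
      integral_rpow_mul_exp_neg_mul_rpow hc2 hw hb]
    have hw1 : (w + 1) / (2 - β) = μ + 1 := by
      rw [hwdef, show 2 * (k:ℝ) + n - 1 - β + 1 = 2 * (k:ℝ) + n - β by ring, hq1]
    rw [show -(w + 1) / (2 - β) = -(μ + 1) by rw [neg_div, hw1], hw1]
    set V : ℝ := A ^ p * (b ^ (-(μ + 1)) * (1 / (2 - β)) * Real.Gamma (μ + 1)) with hVdef
    have hVpos : 0 < V := by positivity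
    rw [ENNReal.ofReal_rpow_of_nonneg hVpos.le (by positivity : (0:ℝ) ≤ 1 / p)]
    refine ENNReal.ofReal_le_ofReal (le_of_eq ?_)
    rw [hq1, hq2, hinv, one_div]
    set R : ℝ := (2 - β) ^ ((2 * μ + 1) * p⁻¹ - μ - 1) * p ^ (-(μ + 1) * p⁻¹) *
        Real.Gamma (μ + 1) ^ p⁻¹ * t ^ ((μ + 1) * (p⁻¹ - 1)) with hRdef
    have hRpos : 0 < R := by positivity
    have hVp : (0:ℝ) < V ^ p⁻¹ := by positivity
    rw [← Real.exp_log hVp, ← Real.exp_log hRpos]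
    congr 1
    have eA : Real.log A = (-μ - 1) * (Real.log (2 - β) + Real.log t) := by
      rw [hAdef, Real.log_rpow (by positivity), Real.log_mul hc2.ne' ht.ne']
    have eb : Real.log b = Real.log p - (2 * Real.log (2 - β) + Real.log t) := by
      rw [hbdef, Real.log_div hp0.ne' (by positivity), Real.log_mul (by positivity) ht.ne',
        Real.log_pow]
      push_cast; ring
    have eV : Real.log (V ^ p⁻¹) = p⁻¹ * (p * Real.log A +
        (-(μ + 1) * Real.log b + -Real.log (2 - β) + Real.log (Real.Gamma (μ + 1)))) := by
      rw [Real.log_rpow hVpos, hVdef,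
        Real.log_mul (by positivity) (by positivity),
        Real.log_mul (by positivity) (by positivity),
        Real.log_mul (by positivity) (by positivity),
        Real.log_rpow hA, Real.log_rpow hb, one_div, Real.log_inv]
    have eR : Real.log R = ((2 * μ + 1) * p⁻¹ - μ - 1) * Real.log (2 - β) +
        (-(μ + 1) * p⁻¹) * Real.log p + p⁻¹ * Real.log (Real.Gamma (μ + 1)) +
        ((μ + 1) * (p⁻¹ - 1)) * Real.log t := by
      rw [hRdef,
        Real.log_mul (by positivity) (by positivity),
        Real.log_mul (by positivity) (by positivity),
        Real.log_mul (by positivity) (by positivity),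
        Real.log_rpow hc2, Real.log_rpow hp0, Real.log_rpow hG, Real.log_rpow ht]
    rw [eV, eR, eA, eb]
    field_simp
    ring
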